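/- For every natural number n, the number of ordered pairs (f, f′) of finitely supported functions f, f′: ℕ × 𝒞 → ℕ such that every value of f and every value of f′ is a triangular number and Σ_{(a,𝔠)} 2^{a+|𝔠|} · (f(a,𝔠) + f′(a,𝔠)) = n is equal to the number of bipartitions of n. -/

import Mathlib

/-- A natural number is triangular if it is of the form `k * (k + 1) / 2`. -/
def IsTriangular (m : ℕ) : Prop := ∃ k : ℕ, m = k * (k + 1) / 2

/-- The sum `|𝔠| = c₁ + ⋯ + c_t` of a finite sequence `𝔠` of strictly positive integers. -/
def csum (c : List ℕ+) : ℕ := (c.map fun x => (x : ℕ)).sum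

namespace TPC

/-- Gauss staircase: G n = 0 + 1 + ⋯ + (n-1). -/
def G (n : ℕ) : ℕ := (List.range n).sum

@[simp] lemma G_zero : G 0 = 0 := rfl
lemma G_succ (n : ℕ) : G (n+1) = G n + n := by
  simp [G, List.range_succ]

lemma G_strictMono : StrictMono fun n => G (n+1) := by
  apply strictMono_nat_of_lt_succ
  intro n; simp only [G_succ]; omega

lemma G_le (k : ℕ) : k ≤ G (k+1) := by
  induction k with
  | zero => simp
  | succ n ih => rw [G_succ]; omega

lemma two_G_succ (k : ℕ) : 2 * G (k+1) = k * (k+1) := by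
  induction k with
  | zero => rfl
  | succ n ih =>
    rw [G_succ]
    have : (n+1)*(n+1+1) = n*(n+1) + 2*(n+1) := by ring
    omega

lemma isTriangular_iff (m : ℕ) : IsTriangular m ↔ ∃ k, m = G (k+1) := by
  have key : ∀ k : ℕ, k * (k+1) / 2 = G (k+1) := by
    intro k; have := two_G_succ k; omega
  constructor
  · rintro ⟨k, rfl⟩; exact ⟨k, (key k).symm ▸ rfl⟩
  · rintro ⟨k, rfl⟩; exact ⟨k, by rw [key]⟩

lemma key1 (o d : ℕ) : G (2*o+d+1) + G (d+1) = 2 * G (o+d+1) + 2 * G o + o := by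
  induction o with
  | zero => simp [two_mul]
  | succ n ih =>
    have hx : 2*(n+1)+d+1 = 2*n+d+1+1+1 := by ring
    have hy : n+1+d+1 = n+d+1+1 := by ring
    rw [hx, hy]
    have a1 := G_succ (2*n+d+1)
    have a2 := G_succ (2*n+d+1+1)
    have a3 := G_succ (n+d+1)
    have a4 := G_succ n
    omega

lemma key2 (e d : ℕ) : G (2*e+d) + G (d+1) = 2 * G e + 2 * G (e+d) + e + d := by
  induction e with
  | zero => simp [G_succ]; omega
  | succ n ih =>
    have hx : 2*(n+1)+d = 2*n+d+1+1 := by ring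
    have hy : n+1+d = n+d+1 := by ring
    rw [hx, hy]
    have a1 := G_succ (2*n+d)
    have a2 := G_succ (2*n+d+1)
    have a3 := G_succ (n+d)
    have a4 := G_succ n
    omega

/-- the core label: `k` such that the 2-core is the staircase of size G (k+1) -/
def coreK (e o : ℕ) : ℕ := if o < e then e - o - 1 else o - e

/-- the key arithmetic identity for the 2-quotient core -/
lemma core_identity (e o : ℕ) :
    G (e + o) + G (coreK e o + 1) = 2 * G e + 2 * G o + o := by
  unfold coreK
  split
  · next h =>
    obtain ⟨d, rfl⟩ : ∃ d, e = o + d + 1 := ⟨e - o - 1, by omega⟩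
    have h1 : o + d + 1 - o - 1 = d := by omega
    have h2 : o + d + 1 + o = 2*o+d+1 := by ring
    rw [h1, h2, key1]
  · next h =>
    obtain ⟨d, rfl⟩ : ∃ d, o = e + d := ⟨o - e, by omega⟩
    have h1 : e + d - e = d := by omega
    have h2 : e + (e + d) = 2*e+d := by ring
    rw [h1, h2, key2]
    ring

def sh (l : List ℕ) : List ℕ := l.zipWith (· + ·) (List.range l.length)
/-- unshift -/
def unsh (l : List ℕ) : List ℕ := l.zipWith (· - ·) (List.range l.length)

@[simp] lemma length_sh (l : List ℕ) : (sh l).length = l.length := by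
  simp [sh]
@[simp] lemma length_unsh (l : List ℕ) : (unsh l).length = l.length := by
  simp [unsh]

lemma getElem_sh (l : List ℕ) (i : ℕ) (h : i < (sh l).length) :
    (sh l)[i] = l[i]'(by simpa using h) + i := by
  simp [sh, List.getElem_zipWith]

lemma getElem_unsh (l : List ℕ) (i : ℕ) (h : i < (unsh l).length) :
    (unsh l)[i] = l[i]'(by simpa using h) - i := by
  simp [unsh, List.getElem_zipWith]

lemma sum_zipWith_add (l r : List ℕ) (h : l.length = r.length) :
    (l.zipWith (· + ·) r).sum = l.sum + r.sum := by
  induction l generalizing r with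
  | nil =>
    have : r = [] := by simpa using (List.eq_nil_of_length_eq_zero h.symm)
    simp [this]
  | cons a l ih =>
    cases r with
    | nil => simp at h
    | cons b r => simp at h; simp [ih r h]; omega

lemma sum_sh (l : List ℕ) : (sh l).sum = l.sum + G l.length := by
  simp [sh, sum_zipWith_add, G]

lemma sorted_lt_sh (l : List ℕ) (hl : l.Pairwise (· ≤ ·)) : (sh l).Pairwise (· < ·) := by
  rw [List.pairwise_iff_getElem] at hl ⊢
  intro i j hi hj hij
  rw [getElem_sh, getElem_sh]
  have := hl i j (by simpa using hi) (by simpa using hj) hij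
  omega

/-- strictly increasing nat lists grow at least linearly -/
lemma sorted_lt_le (b : List ℕ) (hb : b.Pairwise (· < ·)) :
    ∀ d i j, ∀ hj : j < b.length, ∀ _hji : j = i + d, b[i]'(by omega) + d ≤ b[j] := by
  intro d
  induction d with
  | zero => intro i j hj hji; simp only [show j = i by omega]; simp
  | succ n ih =>
    intro i j hj hji
    have h1 : i + n < b.length := by omega
    have h2 := ih i (i+n) h1 rfl
    have h3 : b[i+n] < b[j] := by
      rw [List.pairwise_iff_getElem] at hb
      exact hb (i+n) j h1 hj (by omega)
    omega

lemma sorted_le_unsh (b : List ℕ) (hb : b.Pairwise (· < ·)) : (unsh b).Pairwise (· ≤ ·) := by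
  rw [List.pairwise_iff_getElem]
  intro i j hi hj hij
  rw [getElem_unsh, getElem_unsh]
  have := sorted_lt_le b hb (j - i) i j (by simpa using hj) (by omega)
  omega

lemma unsh_sh (l : List ℕ) : unsh (sh l) = l := by
  apply List.ext_getElem (by simp)
  intro i h1 h2
  rw [getElem_unsh, getElem_sh]
  omega

lemma sh_unsh (b : List ℕ) (hb : b.Pairwise (· < ·)) : sh (unsh b) = b := by
  apply List.ext_getElem (by simp)
  intro i h1 h2
  rw [getElem_sh, getElem_unsh]
  have := sorted_lt_le b hb i 0 i (by simpa using h2) (by omega)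
  omega

/-! ### beta sets -/

def L (t : ℕ) (s : Multiset ℕ) : List ℕ :=
  Multiset.sort (s + Multiset.replicate (t - Multiset.card s) 0) (· ≤ ·)

def toBeta (t : ℕ) (s : Multiset ℕ) : Finset ℕ := (sh (L t s)).toFinset

def ofBeta (B : Finset ℕ) : Multiset ℕ :=
  (((unsh (B.sort (· ≤ ·))).filter (· ≠ 0) : List ℕ) : Multiset ℕ)

section beta
variable (t : ℕ) (s : Multiset ℕ)

lemma L_sorted : (L t s).Pairwise (· ≤ ·) := Multiset.pairwise_sort _ _
lemma L_coe : ((L t s : List ℕ) : Multiset ℕ) = s + Multiset.replicate (t - Multiset.card s) 0 :=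
  Multiset.sort_eq _ _
lemma L_length (h : Multiset.card s ≤ t) : (L t s).length = t := by
  have := congrArg Multiset.card (L_coe t s)
  simp at this; simp [this]; omega
lemma L_sum : (L t s).sum = s.sum := by
  have := congrArg Multiset.sum (L_coe t s)
  simpa using this

lemma shL_sorted : (sh (L t s)).Pairwise (· < ·) := sorted_lt_sh _ (L_sorted t s)
lemma shL_nodup : (sh (L t s)).Nodup := (shL_sorted t s).nodup

lemma card_toBeta (h : Multiset.card s ≤ t) : (toBeta t s).card = t := by
  rw [toBeta, List.toFinset_card_of_nodup (shL_nodup t s)]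
  simp [L_length t s h]

lemma sum_toBeta (h : Multiset.card s ≤ t) : ∑ x ∈ toBeta t s, x = s.sum + G t := by
  rw [toBeta, List.sum_toFinset _ (shL_nodup t s)]
  rw [List.map_id']
  rw [sum_sh]
  rw [L_sum, L_length t s h]

lemma sort_toBeta (h : Multiset.card s ≤ t) :
    (toBeta t s).sort (· ≤ ·) = sh (L t s) := by
  rw [toBeta]
  exact (List.toFinset_sort (· ≤ ·) (shL_nodup t s)).2 ((shL_sorted t s).imp le_of_lt)

lemma ofBeta_toBeta (h : Multiset.card s ≤ t) (hpos : ∀ i ∈ s, 0 < i) :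
    ofBeta (toBeta t s) = s := by
  rw [ofBeta, sort_toBeta t s h, unsh_sh]
  rw [← Multiset.filter_coe, L_coe]
  rw [Multiset.filter_add]
  have h1 : Multiset.filter (· ≠ 0) s = s :=
    Multiset.filter_eq_self.2 (fun a ha => (hpos a ha).ne' )
  have h2 : Multiset.filter (· ≠ 0) (Multiset.replicate (t - Multiset.card s) 0) = 0 := by
    rw [Multiset.eq_zero_iff_forall_notMem]
    intro x hx
    rw [Multiset.mem_filter, Multiset.eq_of_mem_replicate hx.1] at hx
    exact hx.2 rfl
  rw [h1, h2, add_zero]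

lemma pos_ofBeta (B : Finset ℕ) : ∀ i ∈ ofBeta B, 0 < i := by
  intro i hi
  rw [ofBeta, Multiset.mem_coe, List.mem_filter] at hi
  have := hi.2
  simp at this
  omega

lemma card_ofBeta_le (B : Finset ℕ) : Multiset.card (ofBeta B) ≤ B.card := by
  rw [ofBeta]
  simpa using le_trans (List.length_filter_le _ _) (by simp)

lemma sort_sum (B : Finset ℕ) : (B.sort (· ≤ ·)).sum = ∑ x ∈ B, x := by
  have := (Finset.sort_perm_toList B (· ≤ ·)).sum_eq
  rw [this]
  have := Finset.sum_map_toList B id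
  simpa using this

lemma sum_ofBeta (B : Finset ℕ) : (ofBeta B).sum + G B.card = ∑ x ∈ B, x := by
  have key : sh (unsh (B.sort (· ≤ ·))) = B.sort (· ≤ ·) :=
    sh_unsh _ ((Finset.sortedLT_sort B).pairwise)
  have h1 := sum_sh (unsh (B.sort (· ≤ ·)))
  rw [key] at h1
  rw [sort_sum] at h1
  have h2 : (unsh (B.sort (· ≤ ·))).length = B.card := by simp [Finset.length_sort]
  rw [h2] at h1
  -- (unsh b).sum = (filter ≠ 0).sum
  have h3 : (unsh (B.sort (· ≤ ·))).sum = (ofBeta B).sum := by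
    have h4 := congrArg Multiset.sum
      (Multiset.filter_add_not (· ≠ 0) ((unsh (B.sort (· ≤ ·)) : List ℕ) : Multiset ℕ))
    have h5 : (Multiset.filter (fun a => ¬ a ≠ 0)
        ((unsh (B.sort (· ≤ ·)) : List ℕ) : Multiset ℕ)).sum = 0 := by
      apply Multiset.sum_eq_zero
      intro x hx
      rw [Multiset.mem_filter] at hx
      simpa using hx.2
    rw [Multiset.sum_add, h5, add_zero] at h4
    rw [ofBeta]
    rw [Multiset.sum_coe] at h4 ⊢
    exact h4.symm
  rw [← h3, h1]

lemma toBeta_ofBeta (B : Finset ℕ) : toBeta B.card (ofBeta B) = B := by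
  set b := B.sort (· ≤ ·) with hb
  have hsb : b.Pairwise (· < ·) := (Finset.sortedLT_sort B).pairwise
  have hlen : b.length = B.card := Finset.length_sort _
  -- the padded multiset equals ↑(unsh b)
  have hpad : (ofBeta B) + Multiset.replicate (B.card - Multiset.card (ofBeta B)) 0
      = ((unsh b : List ℕ) : Multiset ℕ) := by
    have h1 : Multiset.filter (· ≠ 0) ((unsh b : List ℕ) : Multiset ℕ) = ofBeta B := by
      rw [ofBeta, Multiset.filter_coe]
    have h2 := Multiset.filter_add_not (· ≠ 0) ((unsh b : List ℕ) : Multiset ℕ)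
    have h3 : Multiset.filter (fun a => ¬ a ≠ 0) ((unsh b : List ℕ) : Multiset ℕ)
        = Multiset.replicate (B.card - Multiset.card (ofBeta B)) 0 := by
      rw [Multiset.eq_replicate]
      constructor
      · have := congrArg Multiset.card h2
        simp only [Multiset.card_add] at this
        rw [h1] at this
        simp at this ⊢
        omega
      · intro x hx
        rw [Multiset.mem_filter] at hx
        simpa using hx.2
    rw [← h3, ← h1]
    exact h2
  rw [toBeta, L]
  have hsort : Multiset.sort ((ofBeta B) + Multiset.replicate (B.card - Multiset.card (ofBeta B)) 0) (· ≤ ·) = unsh b := by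
    apply List.Perm.eq_of_pairwise' (r := (· ≤ ·))
    · exact Multiset.pairwise_sort _ _
    · exact sorted_le_unsh _ hsb
    · rw [← Multiset.coe_eq_coe, Multiset.sort_eq, hpad]
  rw [hsort, sh_unsh _ hsb, hb, Finset.sort_toFinset]

end beta

/-! ### parity split -/

def evens (B : Finset ℕ) : Finset ℕ := (B.filter (fun x => x % 2 = 0)).image (· / 2)
def odds (B : Finset ℕ) : Finset ℕ := (B.filter (fun x => x % 2 = 1)).image (· / 2)
def merge (E O : Finset ℕ) : Finset ℕ := E.image (2 * ·) ∪ O.image (fun x => 2*x+1)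

lemma injOn_half_evens (B : Finset ℕ) :
    Set.InjOn (· / 2) (B.filter (fun x => x % 2 = 0)) := by
  intro a ha b hb h
  simp only [Finset.coe_filter, Set.mem_setOf_eq] at ha hb
  simp only at h
  omega

lemma injOn_half_odds (B : Finset ℕ) :
    Set.InjOn (· / 2) (B.filter (fun x => x % 2 = 1)) := by
  intro a ha b hb h
  simp only [Finset.coe_filter, Set.mem_setOf_eq] at ha hb
  simp only at h
  omega

lemma filter_odd_eq (B : Finset ℕ) :
    Finset.filter (fun x => x % 2 = 1) B = Finset.filter (fun x => ¬ x % 2 = 0) B := by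
  apply Finset.filter_congr
  intro x _
  constructor
  · intro h; omega
  · intro h; omega

lemma card_evens_add_card_odds (B : Finset ℕ) : (evens B).card + (odds B).card = B.card := by
  rw [evens, odds, Finset.card_image_of_injOn (injOn_half_evens B),
    Finset.card_image_of_injOn (injOn_half_odds B), filter_odd_eq]
  exact Finset.card_filter_add_card_filter_not _

lemma sum_split (B : Finset ℕ) :
    ∑ x ∈ B, x = 2 * (∑ x ∈ evens B, x) + 2 * (∑ x ∈ odds B, x) + (odds B).card := by
  rw [evens, odds, Finset.sum_image (fun a ha b hb h => injOn_half_evens B ha hb h),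
    Finset.sum_image (fun a ha b hb h => injOn_half_odds B ha hb h),
    Finset.card_image_of_injOn (injOn_half_odds B)]
  rw [← Finset.sum_filter_add_sum_filter_not B (fun x => x % 2 = 0), ← filter_odd_eq]
  rw [Finset.mul_sum, Finset.mul_sum, Finset.card_eq_sum_ones, add_assoc,
    ← Finset.sum_add_distrib]
  congr 1
  · exact Finset.sum_congr rfl (fun x hx => by simp at hx; omega)
  · exact Finset.sum_congr rfl (fun x hx => by simp at hx; omega)

lemma evens_merge (E O : Finset ℕ) : evens (merge E O) = E := by
  ext a
  simp only [evens, merge, Finset.mem_image, Finset.mem_filter, Finset.mem_union]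
  constructor
  · rintro ⟨x, ⟨hx | hx, hpar⟩, rfl⟩
    · obtain ⟨b, hb, rfl⟩ := hx
      simpa [show 2*b/2 = b from by omega] using hb
    · obtain ⟨b, hb, rfl⟩ := hx
      omega
  · intro ha
    exact ⟨2*a, ⟨Or.inl ⟨a, ha, rfl⟩, by omega⟩, by omega⟩

lemma odds_merge (E O : Finset ℕ) : odds (merge E O) = O := by
  ext a
  simp only [odds, merge, Finset.mem_image, Finset.mem_filter, Finset.mem_union]
  constructor
  · rintro ⟨x, ⟨hx | hx, hpar⟩, rfl⟩
    · obtain ⟨b, hb, rfl⟩ := hx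
      omega
    · obtain ⟨b, hb, rfl⟩ := hx
      simpa [show (2*b+1)/2 = b from by omega] using hb
  · intro ha
    exact ⟨2*a+1, ⟨Or.inr ⟨a, ha, rfl⟩, by omega⟩, by omega⟩

lemma merge_split (B : Finset ℕ) : merge (evens B) (odds B) = B := by
  ext a
  simp only [merge, evens, odds, Finset.mem_union, Finset.mem_image, Finset.mem_filter]
  constructor
  · rintro (⟨x, ⟨y, ⟨hy, hp⟩, rfl⟩, rfl⟩ | ⟨x, ⟨y, ⟨hy, hp⟩, rfl⟩, rfl⟩)
    · rwa [show 2 * (y/2) = y from by omega]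
    · rwa [show 2 * (y/2) + 1 = y from by omega]
  · intro ha
    rcases Nat.mod_two_eq_zero_or_one a with h | h
    · exact Or.inl ⟨a/2, ⟨a, ⟨ha, h⟩, rfl⟩, by omega⟩
    · exact Or.inr ⟨a/2, ⟨a, ⟨ha, h⟩, rfl⟩, by omega⟩

lemma card_merge (E O : Finset ℕ) : (merge E O).card = E.card + O.card := by
  rw [merge, Finset.card_union_of_disjoint, Finset.card_image_of_injective _ (fun a b h => by omega),
    Finset.card_image_of_injective _ (fun a b h => by omega)]
  rw [Finset.disjoint_left]
  rintro a ha hb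
  obtain ⟨x, -, rfl⟩ := Finset.mem_image.1 ha
  obtain ⟨y, -, hy⟩ := Finset.mem_image.1 hb
  omega

/-! ### the core maps -/

lemma card_le_sum (s : Multiset ℕ) (h : ∀ i ∈ s, 0 < i) : Multiset.card s ≤ s.sum := by
  induction s using Multiset.induction with
  | empty => simp
  | cons a s ih =>
    simp only [Multiset.card_cons, Multiset.sum_cons]
    have ha := h a (Multiset.mem_cons_self a s)
    have := ih (fun i hi => h i (Multiset.mem_cons_of_mem hi))
    omega

def coreE (k t : ℕ) : ℕ := if k % 2 = 1 then (t+k+1)/2 else (t-k)/2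
def coreO (k t : ℕ) : ℕ := if k % 2 = 1 then (t-k-1)/2 else (t+k)/2

lemma coreEO_add (k t : ℕ) (ht : t % 2 = 0) (hk : 2*k+2 ≤ t) : coreE k t + coreO k t = t := by
  unfold coreE coreO; split <;> omega

lemma coreK_coreEO (k t : ℕ) (ht : t % 2 = 0) (hk : 2*k+2 ≤ t) :
    coreK (coreE k t) (coreO k t) = k := by
  unfold coreK coreE coreO
  rcases Nat.mod_two_eq_zero_or_one k with h | h <;> simp [h] <;> split <;> omega

lemma coreEO_of (e o t k : ℕ) (he : e + o = t) (ht : t % 2 = 0) (hk : coreK e o = k) :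
    coreE k t = e ∧ coreO k t = o := by
  unfold coreK at hk
  unfold coreE coreO
  split at hk <;> constructor <;> split <;> omega

/-- forward data: from a positive multiset to (k, μ, ν) -/
def fwdT (s : Multiset ℕ) : ℕ := 2 * s.sum + 4
def fwdK (s : Multiset ℕ) : ℕ :=
  coreK (evens (toBeta (fwdT s) s)).card (odds (toBeta (fwdT s) s)).card
def fwdE (s : Multiset ℕ) : Multiset ℕ := ofBeta (evens (toBeta (fwdT s) s))
def fwdO (s : Multiset ℕ) : Multiset ℕ := ofBeta (odds (toBeta (fwdT s) s))

def bwd (k : ℕ) (μ ν : Multiset ℕ) : Multiset ℕ :=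
  let t := 2 * (G (k+1) + 2*μ.sum + 2*ν.sum) + 4
  ofBeta (merge (toBeta (coreE k t) μ) (toBeta (coreO k t) ν))

lemma fwd_weight (s : Multiset ℕ) (hs : ∀ i ∈ s, 0 < i) :
    s.sum = G (fwdK s + 1) + 2 * (fwdE s).sum + 2 * (fwdO s).sum ∧
    (evens (toBeta (fwdT s) s)).card + (odds (toBeta (fwdT s) s)).card = fwdT s := by
  set t := fwdT s with htdef
  have hcard : Multiset.card s ≤ t := by
    have := card_le_sum s hs; rw [htdef, fwdT]; omega
  set B := toBeta t s with hBdef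
  have hB : B.card = t := card_toBeta t s hcard
  have hBsum : ∑ x ∈ B, x = s.sum + G t := sum_toBeta t s hcard
  have heo : (evens B).card + (odds B).card = t := by rw [card_evens_add_card_odds, hB]
  have hsplit := sum_split B
  have hE := sum_ofBeta (evens B)
  have hO := sum_ofBeta (odds B)
  have hcore := core_identity (evens B).card (odds B).card
  rw [heo] at hcore
  refine ⟨?_, heo⟩
  rw [fwdK, fwdE, fwdO]
  simp only [← htdef, ← hBdef]
  omega

lemma bwd_fwd (s : Multiset ℕ) (hs : ∀ i ∈ s, 0 < i) :
    bwd (fwdK s) (fwdE s) (fwdO s) = s := by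
  have hw := (fwd_weight s hs).1
  have heo := (fwd_weight s hs).2
  set t := fwdT s with htdef
  have hcard : Multiset.card s ≤ t := by
    have := card_le_sum s hs; rw [htdef, fwdT]; omega
  set B := toBeta t s with hBdef
  rw [bwd]
  have ht2 : 2 * (G (fwdK s + 1) + 2*(fwdE s).sum + 2*(fwdO s).sum) + 4 = t := by
    rw [← hw, htdef, fwdT]
  rw [ht2]
  have ht_even : t % 2 = 0 := by rw [htdef, fwdT]; omega
  have hEO := coreEO_of (evens B).card (odds B).card t (fwdK s) heo ht_even (by rw [fwdK]; try simp only [← htdef, ← hBdef])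
  rw [hEO.1, hEO.2, fwdE, fwdO]
  simp only [← htdef, ← hBdef]
  rw [toBeta_ofBeta (evens B), toBeta_ofBeta (odds B), merge_split]
  exact ofBeta_toBeta t s hcard hs

lemma bwd_weight_aux (k : ℕ) (μ ν : Multiset ℕ) (hμ : ∀ i ∈ μ, 0 < i) (hν : ∀ i ∈ ν, 0 < i) :
    (bwd k μ ν).sum = G (k+1) + 2*μ.sum + 2*ν.sum ∧
    toBeta (fwdT (bwd k μ ν)) (bwd k μ ν)
      = merge (toBeta (coreE k (2 * (G (k+1) + 2*μ.sum + 2*ν.sum) + 4)) μ)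
              (toBeta (coreO k (2 * (G (k+1) + 2*μ.sum + 2*ν.sum) + 4)) ν) := by
  set n := G (k+1) + 2*μ.sum + 2*ν.sum with hndef
  set t := 2*n + 4 with htdef
  have hkn : k ≤ n := le_trans (G_le k) (by omega)
  have ht_even : t % 2 = 0 := by omega
  have hkt : 2*k+2 ≤ t := by omega
  have hcardμ : Multiset.card μ ≤ coreE k t := by
    have h1 := card_le_sum μ hμ
    rw [coreE]; split <;> omega
  have hcardν : Multiset.card ν ≤ coreO k t := by
    have h1 := card_le_sum ν hν
    rw [coreO]; split <;> omega
  set E := toBeta (coreE k t) μ with hEdef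
  set O := toBeta (coreO k t) ν with hOdef
  have hEcard : E.card = coreE k t := card_toBeta _ _ hcardμ
  have hOcard : O.card = coreO k t := card_toBeta _ _ hcardν
  have hEsum : ∑ x ∈ E, x = μ.sum + G (coreE k t) := sum_toBeta _ _ hcardμ
  have hOsum : ∑ x ∈ O, x = ν.sum + G (coreO k t) := sum_toBeta _ _ hcardν
  have hMcard : (merge E O).card = t := by
    rw [card_merge, hEcard, hOcard, coreEO_add k t ht_even hkt]
  have hMsum : ∑ x ∈ merge E O, x = n + G t := by
    rw [sum_split (merge E O), evens_merge, odds_merge, hEsum, hOsum, hOcard]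
    have hci := core_identity (coreE k t) (coreO k t)
    rw [coreEO_add k t ht_even hkt, coreK_coreEO k t ht_even hkt] at hci
    omega
  have hsum : (bwd k μ ν).sum = n := by
    have h1 := sum_ofBeta (merge E O)
    rw [hMcard, hMsum] at h1
    have h2 : bwd k μ ν = ofBeta (merge E O) := by rw [bwd]
    rw [h2]; omega
  refine ⟨hsum, ?_⟩
  have h2 : bwd k μ ν = ofBeta (merge E O) := by rw [bwd]
  have ht' : fwdT (bwd k μ ν) = t := by rw [fwdT, hsum]
  rw [ht', h2, ← hMcard]
  exact toBeta_ofBeta (merge E O)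

lemma fwd_bwd (k : ℕ) (μ ν : Multiset ℕ) (hμ : ∀ i ∈ μ, 0 < i) (hν : ∀ i ∈ ν, 0 < i) :
    fwdK (bwd k μ ν) = k ∧ fwdE (bwd k μ ν) = μ ∧ fwdO (bwd k μ ν) = ν := by
  obtain ⟨hsum, hB⟩ := bwd_weight_aux k μ ν hμ hν
  set n := G (k+1) + 2*μ.sum + 2*ν.sum with hndef
  set t := 2*n + 4 with htdef
  have hkn : k ≤ n := le_trans (G_le k) (by omega)
  have ht_even : t % 2 = 0 := by omega
  have hkt : 2*k+2 ≤ t := by omega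
  have hcardμ : Multiset.card μ ≤ coreE k t := by
    have h1 := card_le_sum μ hμ
    rw [coreE]; split <;> omega
  have hcardν : Multiset.card ν ≤ coreO k t := by
    have h1 := card_le_sum ν hν
    rw [coreO]; split <;> omega
  have ht' : fwdT (bwd k μ ν) = t := by rw [fwdT, hsum]
  have hEm : evens (toBeta (fwdT (bwd k μ ν)) (bwd k μ ν)) = toBeta (coreE k t) μ := by
    rw [hB, evens_merge]
  have hOm : odds (toBeta (fwdT (bwd k μ ν)) (bwd k μ ν)) = toBeta (coreO k t) ν := by
    rw [hB, odds_merge]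
  refine ⟨?_, ?_, ?_⟩
  · rw [fwdK, hEm, hOm, card_toBeta _ _ hcardμ, card_toBeta _ _ hcardν]
    exact coreK_coreEO k t ht_even hkt
  · rw [fwdE, hEm]
    exact ofBeta_toBeta _ _ hcardμ hμ
  · rw [fwdO, hOm]
    exact ofBeta_toBeta _ _ hcardν hν

/-! ### the index tree -/

def w (i : ℕ × List ℕ+) : ℕ := i.1 + csum i.2
def root : ℕ × List ℕ+ := (0, [])
def inj1 (i : ℕ × List ℕ+) : ℕ × List ℕ+ := (i.1 + 1, i.2)
def inj2 (i : ℕ × List ℕ+) : ℕ × List ℕ+ := (0, (⟨i.1 + 1, Nat.succ_pos _⟩ : ℕ+) :: i.2)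

lemma w_inj1 (i : ℕ × List ℕ+) : w (inj1 i) = w i + 1 := by
  simp [w, inj1]; ring
lemma w_inj2 (i : ℕ × List ℕ+) : w (inj2 i) = w i + 1 := by
  have hc : ∀ (x : ℕ+) l, csum (x :: l) = (x : ℕ) + csum l := fun x l => by simp [csum]
  have := hc ⟨i.1 + 1, Nat.succ_pos _⟩ i.2
  simp only [w, inj2]
  change csum _ = i.1 + 1 + csum i.2 at this
  omega
lemma inj1_injective : Function.Injective inj1 := by
  rintro ⟨a, c⟩ ⟨b, d⟩ h
  simp [inj1] at h; simp [h.1, h.2]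
lemma inj2_injective : Function.Injective inj2 := by
  rintro ⟨a, c⟩ ⟨b, d⟩ h
  simp only [inj2, Prod.mk.injEq, true_and] at h
  obtain ⟨h1, h2⟩ := List.cons.inj h
  have : a = b := by
    have := congrArg (fun x : ℕ+ => (x : ℕ)) h1
    simpa using this
  simp [this, h2]
lemma inj1_ne_root (i : ℕ × List ℕ+) : inj1 i ≠ root := by
  simp [inj1, root]
lemma inj2_ne_root (i : ℕ × List ℕ+) : inj2 i ≠ root := by
  simp [inj2, root]
lemma inj1_ne_inj2 (i j : ℕ × List ℕ+) : inj1 i ≠ inj2 j := by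
  simp [inj1, inj2]
lemma trichotomy (i : ℕ × List ℕ+) :
    i = root ∨ (∃ j, i = inj1 j) ∨ ∃ j, i = inj2 j := by
  obtain ⟨a, c⟩ := i
  match a, c with
  | a+1, c => exact Or.inr (Or.inl ⟨(a, c), rfl⟩)
  | 0, [] => exact Or.inl rfl
  | 0, x :: c =>
    have hx : (⟨(x:ℕ) - 1 + 1, Nat.succ_pos _⟩ : ℕ+) = x := by
      apply PNat.eq
      have := x.pos
      show (x:ℕ) - 1 + 1 = x
      omega
    exact Or.inr (Or.inr ⟨((x:ℕ) - 1, c), by simp [inj2, hx]⟩)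

noncomputable def wsum (f : ℕ × List ℕ+ → ℕ) : ℕ := ∑ᶠ i, 2^(w i) * f i

lemma wsum_decomp (f : ℕ × List ℕ+ → ℕ) (hf : (Function.support f).Finite) :
    wsum f = f root + 2 * wsum (f ∘ inj1) + 2 * wsum (f ∘ inj2) := by
  classical
  have h1 : (Function.support (f ∘ inj1)).Finite := by
    apply Set.Finite.preimage (inj1_injective.injOn) hf
  have h2 : (Function.support (f ∘ inj2)).Finite := by
    apply Set.Finite.preimage (inj2_injective.injOn) hf
  set A := h1.toFinset with hA
  set B := h2.toFinset with hB
  set S : Finset (ℕ × List ℕ+) := insert root (A.image inj1 ∪ B.image inj2) with hS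
  have hsub : Function.support (fun i => 2^(w i) * f i) ⊆ (S : Set (ℕ × List ℕ+)) := by
    intro i hi
    have hfi : f i ≠ 0 := by
      intro h
      apply hi
      simp [h]
    rcases trichotomy i with h | ⟨j, rfl⟩ | ⟨j, rfl⟩
    · simp [hS, h]
    · have : j ∈ A := by rw [hA]; simp [Function.support]; exact hfi
      simp only [hS, Finset.coe_insert, Set.mem_insert_iff, Finset.coe_union, Set.mem_union]
      exact Or.inr (Or.inl (by simpa using Finset.mem_image_of_mem inj1 this))
    · have : j ∈ B := by rw [hB]; simp [Function.support]; exact hfi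
      simp only [hS, Finset.coe_insert, Set.mem_insert_iff, Finset.coe_union, Set.mem_union]
      exact Or.inr (Or.inr (by simpa using Finset.mem_image_of_mem inj2 this))
  have hws : wsum f = ∑ i ∈ S, 2^(w i) * f i :=
    finsum_eq_sum_of_support_subset _ hsub
  have hdisj : Disjoint (A.image inj1) (B.image inj2) := by
    rw [Finset.disjoint_left]
    rintro x hx hy
    obtain ⟨a, -, rfl⟩ := Finset.mem_image.1 hx
    obtain ⟨b, -, hb⟩ := Finset.mem_image.1 hy
    exact inj1_ne_inj2 a b hb.symm
  have hroot : root ∉ A.image inj1 ∪ B.image inj2 := by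
    rw [Finset.mem_union]
    rintro (h | h)
    · obtain ⟨a, -, ha⟩ := Finset.mem_image.1 h
      exact inj1_ne_root a ha
    · obtain ⟨a, -, ha⟩ := Finset.mem_image.1 h
      exact inj2_ne_root a ha
  rw [hws, hS, Finset.sum_insert hroot, Finset.sum_union hdisj]
  rw [Finset.sum_image (fun x _ y _ h => inj1_injective h),
    Finset.sum_image (fun x _ y _ h => inj2_injective h)]
  have e1 : ∑ x ∈ A, 2^(w (inj1 x)) * f (inj1 x) = 2 * wsum (f ∘ inj1) := by
    have : wsum (f ∘ inj1) = ∑ x ∈ A, 2^(w x) * (f ∘ inj1) x := by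
      apply finsum_eq_sum_of_support_subset
      intro x hx
      rw [hA]
      simp only [Set.Finite.coe_toFinset]
      intro h
      apply hx
      simp only [Function.mem_support, ne_eq, not_not]
      simp [Function.comp] at h
      simp [h]
    rw [this, Finset.mul_sum]
    apply Finset.sum_congr rfl
    intro x _
    rw [w_inj1]
    simp [Function.comp, pow_succ]
    ring
  have e2 : ∑ x ∈ B, 2^(w (inj2 x)) * f (inj2 x) = 2 * wsum (f ∘ inj2) := by
    have : wsum (f ∘ inj2) = ∑ x ∈ B, 2^(w x) * (f ∘ inj2) x := by
      apply finsum_eq_sum_of_support_subset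
      intro x hx
      rw [hB]
      simp only [Set.Finite.coe_toFinset]
      intro h
      apply hx
      simp only [Function.mem_support, ne_eq, not_not]
      simp [Function.comp] at h
      simp [h]
    rw [this, Finset.mul_sum]
    apply Finset.sum_congr rfl
    intro x _
    rw [w_inj2]
    simp [Function.comp, pow_succ]
    ring
  rw [e1, e2]
  simp [root, w, csum]
  ring

/-! ### glue and conditions -/

def Cond (f : ℕ × List ℕ+ → ℕ) : Prop :=
  (∀ i, IsTriangular (f i)) ∧ (Function.support f).Finite

def glue (k : ℕ) (f₁ f₂ : ℕ × List ℕ+ → ℕ) : ℕ × List ℕ+ → ℕ := fun i =>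
  match i with
  | (0, []) => G (k+1)
  | (a+1, c) => f₁ (a, c)
  | (0, x :: c) => f₂ ((x:ℕ) - 1, c)

lemma glue_root (k : ℕ) (f₁ f₂ : ℕ × List ℕ+ → ℕ) : glue k f₁ f₂ root = G (k+1) := rfl

lemma glue_inj1 (k : ℕ) (f₁ f₂ : ℕ × List ℕ+ → ℕ) : glue k f₁ f₂ ∘ inj1 = f₁ := by
  funext j
  obtain ⟨a, c⟩ := j
  rfl

lemma glue_inj2 (k : ℕ) (f₁ f₂ : ℕ × List ℕ+ → ℕ) : glue k f₁ f₂ ∘ inj2 = f₂ := by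
  funext j
  obtain ⟨a, c⟩ := j
  show f₂ ((((⟨a+1, Nat.succ_pos _⟩ : ℕ+)) : ℕ) - 1, c) = f₂ (a, c)
  norm_num

lemma glue_cond (k : ℕ) (f₁ f₂ : ℕ × List ℕ+ → ℕ) (h₁ : Cond f₁) (h₂ : Cond f₂) :
    Cond (glue k f₁ f₂) := by
  constructor
  · intro i
    rcases trichotomy i with h | ⟨j, rfl⟩ | ⟨j, rfl⟩
    · rw [h, glue_root, isTriangular_iff]; exact ⟨k, rfl⟩
    · rw [show glue k f₁ f₂ (inj1 j) = f₁ j from congrFun (glue_inj1 k f₁ f₂) j]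
      exact h₁.1 j
    · rw [show glue k f₁ f₂ (inj2 j) = f₂ j from congrFun (glue_inj2 k f₁ f₂) j]
      exact h₂.1 j
  · apply Set.Finite.subset
      (Set.Finite.insert root ((h₁.2.image inj1).union (h₂.2.image inj2)))
    intro i hi
    rcases trichotomy i with h | ⟨j, rfl⟩ | ⟨j, rfl⟩
    · simp [h]
    · have : f₁ j ≠ 0 := by
        have := congrFun (glue_inj1 k f₁ f₂) j
        simp only [Function.comp] at this
        rw [← this]; exact hi
      exact Set.mem_insert_iff.2 (Or.inr (Set.mem_union_left _ ⟨j, this, rfl⟩))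
    · have : f₂ j ≠ 0 := by
        have := congrFun (glue_inj2 k f₁ f₂) j
        simp only [Function.comp] at this
        rw [← this]; exact hi
      exact Set.mem_insert_iff.2 (Or.inr (Set.mem_union_right _ ⟨j, this, rfl⟩))

/-! ### inverse of G -/

def invG (m : ℕ) : ℕ := Nat.findGreatest (fun k => G (k+1) ≤ m) m

lemma invG_G (k : ℕ) : invG (G (k+1)) = k := by
  have h1 : k ≤ invG (G (k+1)) := Nat.le_findGreatest (G_le k) le_rfl
  have h2 : invG (G (k+1)) ≤ k := by
    by_contra h
    push_neg at h
    have hs : G (invG (G (k+1)) + 1) ≤ G (k+1) :=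
      Nat.findGreatest_spec (P := fun j => G (j+1) ≤ G (k+1)) (G_le k) le_rfl
    have := G_strictMono h
    simp only at this
    omega
  omega

/-! ### zero lemmas -/

lemma pos_sum_zero (s : Multiset ℕ) (hpos : ∀ i ∈ s, 0 < i) (h : s.sum = 0) : s = 0 := by
  have := card_le_sum s hpos
  rw [h, Nat.le_zero, Multiset.card_eq_zero] at this
  exact this

lemma bwd_pos (k : ℕ) (μ ν : Multiset ℕ) : ∀ i ∈ bwd k μ ν, 0 < i := by
  rw [bwd]
  exact pos_ofBeta _

lemma fwd_zero : fwdK 0 = 0 ∧ fwdE 0 = 0 ∧ fwdO 0 = 0 := by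
  have h := (fwd_weight 0 (by simp)).1
  simp only [Multiset.sum_zero] at h
  have hk : fwdK 0 = 0 := by
    have := G_le (fwdK 0)
    omega
  refine ⟨hk, ?_, ?_⟩
  · exact pos_sum_zero _ (pos_ofBeta _) (by omega)
  · exact pos_sum_zero _ (pos_ofBeta _) (by omega)

lemma bwd_zero : bwd 0 0 0 = 0 := by
  have h := (bwd_weight_aux 0 0 0 (by simp) (by simp)).1
  simp only [Multiset.sum_zero, mul_zero, add_zero] at h
  apply pos_sum_zero _ (bwd_pos 0 0 0)
  rw [h]
  rfl

lemma wsum_zero : wsum 0 = 0 := by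
  rw [wsum]
  simp

lemma cond_zero : Cond 0 := by
  constructor
  · intro i; exact ⟨0, rfl⟩
  · simp

lemma wsum_zero_imp (f : ℕ × List ℕ+ → ℕ) (hc : Cond f) (h : wsum f = 0) : f = 0 := by
  funext i
  have hsupp : (Function.support (fun i => 2^(w i) * f i)).Finite := by
    apply hc.2.subset
    intro j hj
    simp only [Function.mem_support] at hj ⊢
    intro h0
    exact hj (by simp [h0])
  have := single_le_finsum i hsupp (fun j => Nat.zero_le _)
  rw [wsum] at h
  simp only [Pi.zero_apply]
  have h2 : 2^(w i) * f i = 0 := by omega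
  rcases Nat.mul_eq_zero.mp h2 with h3 | h3
  · exact absurd h3 (Nat.pow_pos (n := w i) (by norm_num : 0 < 2)).ne'
  · exact h3

/-! ### the recursive bijection -/

noncomputable def toMS : ℕ → (ℕ × List ℕ+ → ℕ) → Multiset ℕ
  | 0, _ => 0
  | (fuel+1), f => bwd (invG (f root)) (toMS fuel (f ∘ inj1)) (toMS fuel (f ∘ inj2))

noncomputable def toF : ℕ → Multiset ℕ → (ℕ × List ℕ+ → ℕ)
  | 0, _ => 0
  | (fuel+1), s => glue (fwdK s) (toF fuel (fwdE s)) (toF fuel (fwdO s))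

lemma invG_zero : invG 0 = 0 := by
  have := invG_G 0
  simpa [G_succ] using this

lemma comp_zero1 : (0 : ℕ × List ℕ+ → ℕ) ∘ inj1 = 0 := rfl
lemma comp_zero2 : (0 : ℕ × List ℕ+ → ℕ) ∘ inj2 = 0 := rfl

lemma glue_zero : glue 0 0 0 = 0 := by
  funext i
  rcases trichotomy i with h | ⟨j, rfl⟩ | ⟨j, rfl⟩
  · rw [h, glue_root]; rfl
  · exact congrFun (glue_inj1 0 0 0) j
  · exact congrFun (glue_inj2 0 0 0) j

lemma toMS_zero : ∀ fuel, toMS fuel 0 = 0 := by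
  intro fuel
  induction fuel with
  | zero => rfl
  | succ n ih =>
    show bwd (invG ((0 : ℕ × List ℕ+ → ℕ) root)) _ _ = 0
    rw [comp_zero1, comp_zero2, ih]
    simp only [Pi.zero_apply, invG_zero]
    exact bwd_zero

lemma fwdE_pos (s : Multiset ℕ) : ∀ i ∈ fwdE s, 0 < i := by rw [fwdE]; exact pos_ofBeta _
lemma fwdO_pos (s : Multiset ℕ) : ∀ i ∈ fwdO s, 0 < i := by rw [fwdO]; exact pos_ofBeta _

lemma toF_zero : ∀ fuel, toF fuel 0 = 0 := by
  intro fuel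
  induction fuel with
  | zero => rfl
  | succ n ih =>
    show glue (fwdK 0) (toF n (fwdE 0)) (toF n (fwdO 0)) = 0
    rw [fwd_zero.1, fwd_zero.2.1, fwd_zero.2.2, ih]
    exact glue_zero

lemma cond_comp1 (f : ℕ × List ℕ+ → ℕ) (hc : Cond f) : Cond (f ∘ inj1) := by
  refine ⟨fun i => hc.1 _, ?_⟩
  apply Set.Finite.preimage (inj1_injective.injOn) hc.2

lemma cond_comp2 (f : ℕ × List ℕ+ → ℕ) (hc : Cond f) : Cond (f ∘ inj2) := by
  refine ⟨fun i => hc.1 _, ?_⟩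
  apply Set.Finite.preimage (inj2_injective.injOn) hc.2

lemma toMS_spec : ∀ fuel f, Cond f → wsum f < fuel →
    (toMS fuel f).sum = wsum f ∧ (∀ i ∈ toMS fuel f, 0 < i) := by
  intro fuel
  induction fuel with
  | zero => intro f _ h; omega
  | succ n ih =>
    intro f hc hlt
    by_cases h0 : wsum f = 0
    · rw [wsum_zero_imp f hc h0, toMS_zero, wsum_zero]
      simp
    · have hdec := wsum_decomp f hc.2
      have hc1 := cond_comp1 f hc
      have hc2 := cond_comp2 f hc
      have hw1 : wsum (f ∘ inj1) < n := by omega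
      have hw2 : wsum (f ∘ inj2) < n := by omega
      obtain ⟨hs1, hp1⟩ := ih _ hc1 hw1
      obtain ⟨hs2, hp2⟩ := ih _ hc2 hw2
      obtain ⟨k₀, hk₀⟩ := (isTriangular_iff _).1 (hc.1 root)
      show (bwd (invG (f root)) (toMS n (f ∘ inj1)) (toMS n (f ∘ inj2))).sum = wsum f ∧ _
      rw [hk₀, invG_G]
      have hbw := (bwd_weight_aux k₀ _ _ hp1 hp2).1
      constructor
      · rw [hbw, hs1, hs2]; omega
      · exact bwd_pos _ _ _

lemma toF_spec : ∀ fuel s, (∀ i ∈ s, 0 < i) → s.sum < fuel →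
    wsum (toF fuel s) = s.sum ∧ Cond (toF fuel s) := by
  intro fuel
  induction fuel with
  | zero => intro s _ h; omega
  | succ n ih =>
    intro s hpos hlt
    by_cases h0 : s.sum = 0
    · rw [pos_sum_zero s hpos h0, toF_zero, wsum_zero]
      exact ⟨rfl, cond_zero⟩
    · have hw := (fwd_weight s hpos).1
      have hw1 : (fwdE s).sum < n := by omega
      have hw2 : (fwdO s).sum < n := by omega
      obtain ⟨hs1, hc1⟩ := ih _ (fwdE_pos s) hw1
      obtain ⟨hs2, hc2⟩ := ih _ (fwdO_pos s) hw2
      show wsum (glue (fwdK s) (toF n (fwdE s)) (toF n (fwdO s))) = s.sum ∧ _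
      have hcg := glue_cond (fwdK s) _ _ hc1 hc2
      refine ⟨?_, hcg⟩
      rw [wsum_decomp _ hcg.2, glue_root, glue_inj1, glue_inj2, hs1, hs2]
      omega

lemma toF_toMS : ∀ fuel f, Cond f → wsum f < fuel → toF fuel (toMS fuel f) = f := by
  intro fuel
  induction fuel with
  | zero => intro f _ h; omega
  | succ n ih =>
    intro f hc hlt
    by_cases h0 : wsum f = 0
    · rw [wsum_zero_imp f hc h0, toMS_zero, toF_zero]
    · have hdec := wsum_decomp f hc.2
      have hc1 := cond_comp1 f hc
      have hc2 := cond_comp2 f hc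
      have hw1 : wsum (f ∘ inj1) < n := by omega
      have hw2 : wsum (f ∘ inj2) < n := by omega
      obtain ⟨hs1, hp1⟩ := toMS_spec n _ hc1 hw1
      obtain ⟨hs2, hp2⟩ := toMS_spec n _ hc2 hw2
      obtain ⟨k₀, hk₀⟩ := (isTriangular_iff _).1 (hc.1 root)
      show toF (n+1) (bwd (invG (f root)) (toMS n (f ∘ inj1)) (toMS n (f ∘ inj2))) = f
      rw [hk₀, invG_G]
      show glue (fwdK (bwd k₀ _ _)) (toF n (fwdE (bwd k₀ _ _))) (toF n (fwdO (bwd k₀ _ _))) = f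
      have hfb := fwd_bwd k₀ (toMS n (f ∘ inj1)) (toMS n (f ∘ inj2)) hp1 hp2
      rw [hfb.1, hfb.2.1, hfb.2.2, ih _ hc1 hw1, ih _ hc2 hw2]
      funext i
      rcases trichotomy i with h | ⟨j, rfl⟩ | ⟨j, rfl⟩
      · rw [h, glue_root, hk₀]
      · exact congrFun (glue_inj1 k₀ (f ∘ inj1) (f ∘ inj2)) j
      · exact congrFun (glue_inj2 k₀ (f ∘ inj1) (f ∘ inj2)) j

lemma toMS_toF : ∀ fuel s, (∀ i ∈ s, 0 < i) → s.sum < fuel → toMS fuel (toF fuel s) = s := by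
  intro fuel
  induction fuel with
  | zero => intro s _ h; omega
  | succ n ih =>
    intro s hpos hlt
    by_cases h0 : s.sum = 0
    · rw [pos_sum_zero s hpos h0, toF_zero, toMS_zero]
    · have hw := (fwd_weight s hpos).1
      have hw1 : (fwdE s).sum < n := by omega
      have hw2 : (fwdO s).sum < n := by omega
      show toMS (n+1) (glue (fwdK s) (toF n (fwdE s)) (toF n (fwdO s))) = s
      show bwd (invG (glue (fwdK s) (toF n (fwdE s)) (toF n (fwdO s)) root)) _ _ = s
      rw [glue_root, invG_G, glue_inj1, glue_inj2]
      rw [ih _ (fwdE_pos s) hw1, ih _ (fwdO_pos s) hw2]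
      exact bwd_fwd s hpos

/-! ### packaging as an equivalence -/

lemma gsupp_finite (f : ℕ × List ℕ+ → ℕ) (hf : (Function.support f).Finite) :
    (Function.support fun i => 2^(w i) * f i).Finite := by
  apply hf.subset
  intro i hi
  simp only [Function.mem_support] at hi ⊢
  intro h0
  exact hi (by simp [h0])

lemma pair_sum (f g : ℕ × List ℕ+ → ℕ) (hf : (Function.support f).Finite)
    (hg : (Function.support g).Finite) :
    ∑ᶠ i : ℕ × List ℕ+, 2 ^ (i.1 + csum i.2) * (f i + g i) = wsum f + wsum g := by
  have h1 : (fun i : ℕ × List ℕ+ => 2 ^ (i.1 + csum i.2) * (f i + g i))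
      = fun i => (fun j => 2^(w j) * f j) i + (fun j => 2^(w j) * g j) i := by
    funext i
    simp only [w]
    ring
  rw [h1, finsum_add_distrib (gsupp_finite f hf) (gsupp_finite g hg)]
  rfl

noncomputable def Phi (f : {f : ℕ × List ℕ+ → ℕ // Cond f}) : Σ m : ℕ, Nat.Partition m :=
  ⟨wsum f.1, ⟨toMS (wsum f.1 + 1) f.1,
    fun {i} hi => (toMS_spec _ _ f.2 (lt_add_one _)).2 i hi,
    (toMS_spec _ _ f.2 (lt_add_one _)).1⟩⟩

noncomputable def Psi (p : Σ m : ℕ, Nat.Partition m) : {f : ℕ × List ℕ+ → ℕ // Cond f} :=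
  ⟨toF (p.1 + 1) p.2.parts,
    (toF_spec (p.1+1) p.2.parts (fun i hi => p.2.parts_pos hi)
      (by rw [p.2.parts_sum]; omega)).2⟩

lemma Phi_weight (f : {f : ℕ × List ℕ+ → ℕ // Cond f}) : (Phi f).1 = wsum f.1 := rfl

lemma Psi_weight (p : Σ m : ℕ, Nat.Partition m) : wsum (Psi p).1 = p.1 := by
  rw [Psi]
  have := (toF_spec (p.1+1) p.2.parts (fun i hi => p.2.parts_pos hi)
      (by rw [p.2.parts_sum]; omega)).1
  rw [this, p.2.parts_sum]

lemma sigma_ext (a b : Σ m : ℕ, Nat.Partition m) (h : a.2.parts = b.2.parts) : a = b := by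
  obtain ⟨m, P⟩ := a; obtain ⟨q, Q⟩ := b
  simp only at h
  have hm : m = q := by rw [← P.parts_sum, ← Q.parts_sum, h]
  subst hm
  simp only [Sigma.mk.inj_iff, heq_eq_eq]
  exact ⟨by trivial, Nat.Partition.ext h⟩

lemma Psi_Phi (f : {f : ℕ × List ℕ+ → ℕ // Cond f}) : Psi (Phi f) = f := by
  apply Subtype.ext
  rw [Psi]
  simp only [Phi]
  exact toF_toMS _ _ f.2 (lt_add_one _)

lemma Phi_Psi (p : Σ m : ℕ, Nat.Partition m) : Phi (Psi p) = p := by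
  apply sigma_ext
  simp only [Phi]
  have hw : wsum (Psi p).1 = p.1 := Psi_weight p
  rw [hw]
  show toMS (p.1 + 1) (toF (p.1+1) p.2.parts) = p.2.parts
  exact toMS_toF _ _ (fun i hi => p.2.parts_pos hi) (by rw [p.2.parts_sum]; omega)

end TPC

/-- For every natural number `n`, the number of ordered pairs `(f, f′)` of finitely supported
functions `ℕ × 𝒞 → ℕ` all of whose values are triangular numbers and which satisfy
`∑ 2^{a + |𝔠|} * (f (a, 𝔠) + f′ (a, 𝔠)) = n` equals the number of bipartitions of `n`. -/
theorem triangular_pair_count_eq_bipartitions (n : ℕ) :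
    Set.ncard { ff : (ℕ × List ℕ+ → ℕ) × (ℕ × List ℕ+ → ℕ) |
      (∀ i, IsTriangular (ff.1 i)) ∧ (∀ i, IsTriangular (ff.2 i)) ∧
      (Function.support ff.1).Finite ∧ (Function.support ff.2).Finite ∧
      ∑ᶠ i : ℕ × List ℕ+, 2 ^ (i.1 + csum i.2) * (ff.1 i + ff.2 i) = n } =
    Set.ncard { pq : (Σ m : ℕ, Nat.Partition m) × (Σ m : ℕ, Nat.Partition m) |
      pq.1.1 + pq.2.1 = n } := by
  classical
  rw [← Nat.card_coe_set_eq, ← Nat.card_coe_set_eq]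
  apply Nat.card_congr
  refine
    { toFun := fun x =>
        ⟨(TPC.Phi ⟨x.1.1, x.2.1, x.2.2.2.1⟩, TPC.Phi ⟨x.1.2, x.2.2.1, x.2.2.2.2.1⟩), ?_⟩,
      invFun := fun y =>
        ⟨((TPC.Psi y.1.1).1, (TPC.Psi y.1.2).1), ?_, ?_, ?_, ?_, ?_⟩,
      left_inv := ?_, right_inv := ?_ }
  · have hx := x.2.2.2.2.2
    rw [TPC.pair_sum _ _ x.2.2.2.1 x.2.2.2.2.1] at hx
    exact hx
  · exact (TPC.Psi y.1.1).2.1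
  · exact (TPC.Psi y.1.2).2.1
  · exact (TPC.Psi y.1.1).2.2
  · exact (TPC.Psi y.1.2).2.2
  · rw [TPC.pair_sum _ _ (TPC.Psi y.1.1).2.2 (TPC.Psi y.1.2).2.2,
      TPC.Psi_weight, TPC.Psi_weight]
    exact y.2
  · intro x
    apply Subtype.ext
    have h1 := congrArg Subtype.val (TPC.Psi_Phi ⟨x.1.1, x.2.1, x.2.2.2.1⟩)
    have h2 := congrArg Subtype.val (TPC.Psi_Phi ⟨x.1.2, x.2.2.1, x.2.2.2.2.1⟩)
    exact Prod.ext h1 h2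
  · intro y
    apply Subtype.ext
    have key : ∀ (z : Σ m : ℕ, Nat.Partition m) (h1 : ∀ i, IsTriangular ((TPC.Psi z).1 i))
        (h2 : (Function.support (TPC.Psi z).1).Finite),
        TPC.Phi ⟨(TPC.Psi z).1, h1, h2⟩ = z := by
      intro z h1 h2
      show TPC.Phi (TPC.Psi z) = z
      exact TPC.Phi_Psi z
    exact Prod.ext (key y.1.1 (TPC.Psi y.1.1).2.1 (TPC.Psi y.1.1).2.2)
      (key y.1.2 (TPC.Psi y.1.2).2.1 (TPC.Psi y.1.2).2.2)
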